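/- Let N_bs, N_rf, K be positive integers with N_rf ≤ N_bs, let α > 0, p_n > 0, let Q ∈ ℂ^{N_bs×N_bs} be Hermitian positive definite, set P = α·I_K, and let S ∈ ℂ^{K×K} be unitary (so S S* = I_K, i.e. τ = K). Define Q̄ = (αQ + p_n I_{N_bs})^{-1/2} (αQ)² (αQ + p_n I_{N_bs})^{-1/2}, and let U° ∈ ℂ^{N_bs×N_rf} be a matrix whose columns are orthonormal eigenvectors of Q̄ corresponding to its N_rf largest eigenvalues (counted with multiplicity). Then for every unitary matrix V ∈ ℂ^{N_rf×N_rf} and every diagonal matrix D ∈ ℂ^{N_rf×N_rf} with strictly positive real diagonal entries, the matrix W° = V D (U°)* satisfies f(W°) ≥ f(W) for every W ∈ ℂ^{N_rf×N_bs} of full row rank, i.e. W° maximizes the channel-estimation objective f among all (unconstrained complex-gain) analog combiners. -/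

import Mathlib

open Matrix Kronecker ComplexOrder

/-- The channel-estimation objective
`f(W) = tr( (P S* ⊗ Q W*) [ (S P S* ⊗ W Q W*) + p_n (I_τ ⊗ W W*) ]⁻¹ (S P* ⊗ W Q*) )`. -/
noncomputable def channelObjective {K τ Nbs Nrf : ℕ} (pn : ℝ)
    (P : Matrix (Fin K) (Fin K) ℂ) (Q : Matrix (Fin Nbs) (Fin Nbs) ℂ)
    (S : Matrix (Fin τ) (Fin K) ℂ) (W : Matrix (Fin Nrf) (Fin Nbs) ℂ) : ℂ :=
  Matrix.trace (((P * Sᴴ) ⊗ₖ (Q * Wᴴ)) *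
    ((S * P * Sᴴ) ⊗ₖ (W * Q * Wᴴ) +
      (pn : ℂ) • ((1 : Matrix (Fin τ) (Fin τ) ℂ) ⊗ₖ (W * Wᴴ)))⁻¹ *
    ((S * Pᴴ) ⊗ₖ (W * Qᴴ)))

/-- Cancellation helper: if `B * C = 1` then `B * (C * X) = X`. -/
lemma mul_cancel_left {l m n : Type*} [Fintype l] [Fintype m] [DecidableEq l]
    {B : Matrix l m ℂ} {C : Matrix m l ℂ} (h : B * C = 1) (X : Matrix l n ℂ) :
    B * (C * X) = X := by
  rw [← Matrix.mul_assoc, h, Matrix.one_mul]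

lemma aux_inj_of_rank {m n : ℕ} (B : Matrix (Fin m) (Fin n) ℂ) (h : B.rank = n) :
    ∀ x : Fin n → ℂ, x ≠ 0 → B *ᵥ x ≠ 0 := by
  have hker : LinearMap.ker B.mulVecLin = ⊥ := by
    have hrn := LinearMap.finrank_range_add_finrank_ker B.mulVecLin
    rw [Module.finrank_fintype_fun_eq_card, Fintype.card_fin] at hrn
    have : Module.finrank ℂ (LinearMap.ker B.mulVecLin) = 0 := by
      have h2 : B.rank = Module.finrank ℂ (LinearMap.range B.mulVecLin) := rfl
      omega
    exact Submodule.finrank_eq_zero.mp this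
  intro x hx hBx
  have h0 : B.mulVecLin x = 0 := by simpa [Matrix.mulVecLin_apply] using hBx
  exact hx (by simpa using (LinearMap.ker_eq_bot.mp hker) (by simpa using h0))

lemma aux_posDef_conj {m n : Type*} [Fintype m] [Fintype n] (T : Matrix n n ℂ) (hT : T.PosDef)
    (B : Matrix n m ℂ) (hB : ∀ x : m → ℂ, x ≠ 0 → B *ᵥ x ≠ 0) : (Bᴴ * T * B).PosDef := by
  rw [posDef_iff_dotProduct_mulVec]
  constructor
  · show (Bᴴ * T * B)ᴴ = _
    rw [conjTranspose_mul, conjTranspose_mul, conjTranspose_conjTranspose, hT.1.eq,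
      Matrix.mul_assoc]
  · intro x hx
    have key : dotProduct (star x) ((Bᴴ * T * B) *ᵥ x) =
        dotProduct (star (B *ᵥ x)) (T *ᵥ (B *ᵥ x)) := by
      rw [star_mulVec, ← Matrix.mulVec_mulVec, ← Matrix.mulVec_mulVec, dotProduct_mulVec (star x)]
    rw [key]
    exact hT.dotProduct_mulVec_pos (hB x hx)

lemma aux_trace_diagonal_mul {n : Type*} [Fintype n] [DecidableEq n] (v : n → ℂ)
    (M : Matrix n n ℂ) : Matrix.trace (Matrix.diagonal v * M) = ∑ i, v i * M i i := by
  simp [Matrix.trace, Matrix.diag, Matrix.diagonal_mul]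

lemma aux_diag_nonneg {n : Type*} [Fintype n] [DecidableEq n] {P : Matrix n n ℂ}
    (hP : P.PosSemidef) (i : n) : 0 ≤ P i i := by
  have := hP.dotProduct_mulVec_nonneg (Pi.single i 1)
  simpa [dotProduct, mulVec, Pi.single_apply] using this

lemma aux_proj_diag {n : Type*} [Fintype n] [DecidableEq n] {P : Matrix n n ℂ}
    (hH : Pᴴ = P) (hI : P * P = P) (i : n) :
    P i i = ((P i i).re : ℂ) ∧ 0 ≤ (P i i).re ∧ (P i i).re ≤ 1 := by
  have hpsd : P.PosSemidef := by
    have h := Matrix.posSemidef_conjTranspose_mul_self P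
    rwa [hH, hI] at h
  have h0 : 0 ≤ P i i := aux_diag_nonneg hpsd i
  have h1H : (1 - P)ᴴ = 1 - P := by rw [conjTranspose_sub, conjTranspose_one, hH]
  have h1I : (1 - P) * (1 - P) = 1 - P := by
    rw [Matrix.sub_mul, Matrix.mul_sub, Matrix.mul_sub, Matrix.one_mul, Matrix.mul_one, hI]
    simp
  have hpsd1 : (1 - P).PosSemidef := by
    have h := Matrix.posSemidef_conjTranspose_mul_self (1 - P)
    rwa [h1H, h1I] at h
  have h2 : 0 ≤ (1 - P) i i := aux_diag_nonneg hpsd1 i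
  have h2' : (1 - P) i i = 1 - P i i := by simp [Matrix.sub_apply, Matrix.one_apply_eq]
  rw [h2'] at h2
  obtain ⟨hre, him⟩ := Complex.nonneg_iff.mp h0
  obtain ⟨hre1, _⟩ := Complex.nonneg_iff.mp h2
  refine ⟨Complex.ext rfl (by simpa using him.symm), hre, ?_⟩
  simp only [Complex.sub_re, Complex.one_re] at hre1
  linarith

lemma aux_sum_bound {Nbs Nrf : ℕ} (hNrf : 0 < Nrf) (hle : Nrf ≤ Nbs)
    (lam : Fin Nbs → ℝ) (hlam : ∀ i j : Fin Nbs, i ≤ j → lam j ≤ lam i)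
    (t : Fin Nbs → ℝ) (ht0 : ∀ i, 0 ≤ t i) (ht1 : ∀ i, t i ≤ 1)
    (hsum : ∑ i, t i = (Nrf : ℝ)) :
    ∑ i, lam i * t i ≤ ∑ j : Fin Nrf, lam (Fin.castLE hle j) := by
  have hNbs : 0 < Nbs := lt_of_lt_of_le hNrf hle
  set iₓ : Fin Nbs := ⟨Nrf - 1, by omega⟩ with hix
  set c : ℝ := lam iₓ with hc
  have hfilter : (Finset.univ.filter (fun i : Fin Nbs => (i : ℕ) < Nrf)) =
      Finset.univ.map (Fin.castLEEmb hle) := by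
    ext i
    simp only [Finset.mem_filter, Finset.mem_univ, true_and, Finset.mem_map,
      Fin.castLEEmb_apply]
    constructor
    · intro h; exact ⟨⟨i, h⟩, by ext; simp⟩
    · rintro ⟨j, rfl⟩; simpa using j.2
  have hcard : (Finset.univ.filter (fun i : Fin Nbs => (i : ℕ) < Nrf)).card = Nrf := by
    rw [hfilter, Finset.card_map, Finset.card_univ, Fintype.card_fin]
  have hsum2 : ∑ j : Fin Nrf, lam (Fin.castLE hle j) =
      ∑ i ∈ Finset.univ.filter (fun i : Fin Nbs => (i : ℕ) < Nrf), lam i := by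
    rw [hfilter, Finset.sum_map]; rfl
  rw [hsum2]
  have key : ∀ i : Fin Nbs, lam i * t i ≤
      c * t i + (if (i : ℕ) < Nrf then lam i - c else 0) := by
    intro i
    by_cases h : (i : ℕ) < Nrf
    · simp only [h, if_pos]
      have hlami : c ≤ lam i := hlam i iₓ (by simp [hix, Fin.le_def]; omega)
      nlinarith [ht1 i]
    · simp only [h, if_neg, not_false_iff, add_zero]
      have hlami : lam i ≤ c := hlam iₓ i (by simp [hix, Fin.le_def]; omega)
      nlinarith [ht0 i]
  calc ∑ i, lam i * t i
      ≤ ∑ i, (c * t i + (if (i : ℕ) < Nrf then lam i - c else 0)) :=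
        Finset.sum_le_sum (fun i _ => key i)
    _ = c * (Nrf : ℝ) +
        ∑ i ∈ Finset.univ.filter (fun i : Fin Nbs => (i : ℕ) < Nrf), (lam i - c) := by
        rw [Finset.sum_add_distrib, ← Finset.mul_sum, hsum, ← Finset.sum_filter]
    _ = ∑ i ∈ Finset.univ.filter (fun i : Fin Nbs => (i : ℕ) < Nrf), lam i := by
        rw [Finset.sum_sub_distrib, Finset.sum_const, hcard]
        ring

lemma aux_conj_herm {m n : Type*} [Fintype m] [Fintype n] (X : Matrix m n ℂ)
    (M : Matrix m m ℂ) (hM : Mᴴ = M) : (Xᴴ * M * X)ᴴ = Xᴴ * M * X := by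
  rw [conjTranspose_mul, conjTranspose_mul, conjTranspose_conjTranspose, hM, Matrix.mul_assoc]

lemma objective_simp {K Nbs Nrf : ℕ} (α pn : ℝ)
    (Q : Matrix (Fin Nbs) (Fin Nbs) ℂ) (hQH : Qᴴ = Q)
    (S : Matrix (Fin K) (Fin K) ℂ) (hS : S * Sᴴ = 1)
    (W : Matrix (Fin Nrf) (Fin Nbs) ℂ) :
    channelObjective pn ((α : ℂ) • (1 : Matrix (Fin K) (Fin K) ℂ)) Q S W =
      (K : ℂ) * Matrix.trace (((α : ℂ) • Q) * Wᴴ *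
        (W * ((α : ℂ) • Q + (pn : ℂ) • 1) * Wᴴ)⁻¹ * (W * ((α : ℂ) • Q))) := by
  have hS' : Sᴴ * S = 1 := mul_eq_one_comm.mp hS
  have hPH : ((α : ℂ) • (1 : Matrix (Fin K) (Fin K) ℂ))ᴴ = (α : ℂ) • 1 := by
    simp [conjTranspose_smul, Complex.star_def, Complex.conj_ofReal]
  set Mw : Matrix (Fin Nrf) (Fin Nrf) ℂ :=
    W * ((α : ℂ) • Q + (pn : ℂ) • 1) * Wᴴ with hMw
  have hMw' : Mw = (α : ℂ) • (W * Q * Wᴴ) + (pn : ℂ) • (W * Wᴴ) := by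
    rw [hMw, Matrix.mul_add, Matrix.add_mul]
    simp [Matrix.mul_smul, Matrix.smul_mul]
  have hinner : (S * ((α : ℂ) • (1 : Matrix (Fin K) (Fin K) ℂ)) * Sᴴ) ⊗ₖ (W * Q * Wᴴ) +
      (pn : ℂ) • ((1 : Matrix (Fin K) (Fin K) ℂ) ⊗ₖ (W * Wᴴ)) =
      (1 : Matrix (Fin K) (Fin K) ℂ) ⊗ₖ Mw := by
    have h1 : S * ((α : ℂ) • (1 : Matrix (Fin K) (Fin K) ℂ)) * Sᴴ =
        (α : ℂ) • (1 : Matrix (Fin K) (Fin K) ℂ) := by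
      simp [Matrix.mul_smul, Matrix.smul_mul, hS]
    rw [h1, hMw', kronecker_add, Matrix.smul_kronecker, Matrix.kronecker_smul,
      Matrix.kronecker_smul]
  unfold channelObjective
  rw [hinner, Matrix.inv_kronecker, inv_one]
  have hleft : ((α : ℂ) • (1 : Matrix (Fin K) (Fin K) ℂ)) * Sᴴ = (α : ℂ) • Sᴴ := by simp
  have hright : S * ((α : ℂ) • (1 : Matrix (Fin K) (Fin K) ℂ))ᴴ = (α : ℂ) • S := by
    rw [hPH]; simp [Matrix.mul_smul]
  rw [hleft, hright, hQH]
  rw [Matrix.smul_kronecker, Matrix.smul_kronecker, Matrix.smul_mul, Matrix.mul_smul,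
    Matrix.smul_mul, ← Matrix.mul_kronecker_mul, Matrix.smul_mul, ← Matrix.mul_kronecker_mul]
  simp only [Matrix.mul_one, Matrix.one_mul, hS', Matrix.trace_smul, Matrix.trace_kronecker,
    Matrix.trace_one, Fintype.card_fin, Matrix.smul_mul, Matrix.mul_smul, smul_eq_mul]
  ring


/-- Theorem 1 of the paper: the unconstrained complex-gain analog combiner
`W° = V D (U°)*`, where the columns of `U°` are orthonormal eigenvectors of
`Q̄ = (αQ + pₙI)^{-1/2} (αQ)² (αQ + pₙI)^{-1/2}` corresponding to its `N_rf`
largest eigenvalues, maximizes the channel-estimation objective `f` among all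
full-row-rank combiners, for every unitary `V` and every diagonal `D` with
strictly positive real diagonal entries. Here `R` is the (unique) Hermitian
positive definite square root of `αQ + pₙI`, and `E` together with the
decreasingly sorted eigenvalue list `lam` gives a unitary eigendecomposition
of `Q̄ = R⁻¹ (αQ)² R⁻¹`. -/
theorem optimal_unconstrained_combiner
    (Nbs Nrf K : ℕ) (hNbs : 0 < Nbs) (hNrf : 0 < Nrf) (hK : 0 < K)
    (hle : Nrf ≤ Nbs) (α pn : ℝ) (hα : 0 < α) (hpn : 0 < pn)
    (Q : Matrix (Fin Nbs) (Fin Nbs) ℂ) (hQ : Q.PosDef)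
    (S : Matrix (Fin K) (Fin K) ℂ) (hS : S * Sᴴ = 1)
    -- `R` is the Hermitian positive definite square root of `αQ + pₙ I`
    (R : Matrix (Fin Nbs) (Fin Nbs) ℂ) (hR : R.PosDef)
    (hRsq : R * R = (α : ℂ) • Q + (pn : ℂ) • 1)
    -- unitary eigendecomposition of `Q̄ = R⁻¹ (αQ)² R⁻¹` with decreasing eigenvalues
    (E : Matrix (Fin Nbs) (Fin Nbs) ℂ) (hE : E ∈ Matrix.unitaryGroup (Fin Nbs) ℂ)
    (lam : Fin Nbs → ℝ) (hlam : ∀ i j : Fin Nbs, i ≤ j → lam j ≤ lam i)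
    (hdecomp : R⁻¹ * (((α : ℂ) • Q) * ((α : ℂ) • Q)) * R⁻¹ =
      E * Matrix.diagonal (fun i => (lam i : ℂ)) * Eᴴ)
    -- `U°` consists of the first `N_rf` columns of `E`: orthonormal eigenvectors
    -- of `Q̄` corresponding to its `N_rf` largest eigenvalues
    (Uo : Matrix (Fin Nbs) (Fin Nrf) ℂ)
    (hUo : Uo = Matrix.of fun i j => E i (Fin.castLE hle j))
    -- arbitrary unitary `V` and diagonal `D` with positive real diagonal entries
    (V : Matrix (Fin Nrf) (Fin Nrf) ℂ) (hV : V ∈ Matrix.unitaryGroup (Fin Nrf) ℂ)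
    (d : Fin Nrf → ℝ) (hd : ∀ i, 0 < d i) :
    ∀ W : Matrix (Fin Nrf) (Fin Nbs) ℂ, W.rank = Nrf →
      channelObjective pn ((α : ℂ) • (1 : Matrix (Fin K) (Fin K) ℂ)) Q S W ≤
        channelObjective pn ((α : ℂ) • (1 : Matrix (Fin K) (Fin K) ℂ)) Q S
          (V * Matrix.diagonal (fun i => (d i : ℂ)) * Uoᴴ) := by
  intro W hW
  classical
  have hQH : Qᴴ = Q := hQ.1
  have hRH : Rᴴ = R := hR.1
  have hRdet : IsUnit R.det := (Matrix.isUnit_iff_isUnit_det R).mp hR.isUnit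
  have hRRinv : R * R⁻¹ = 1 := Matrix.mul_nonsing_inv R hRdet
  have hRinvR : R⁻¹ * R = 1 := Matrix.nonsing_inv_mul R hRdet
  -- rewrite both objectives
  rw [objective_simp α pn Q hQH S hS W,
    objective_simp α pn Q hQH S hS (V * Matrix.diagonal (fun i => (d i : ℂ)) * Uoᴴ)]
  set A : Matrix (Fin Nbs) (Fin Nbs) ℂ := (α : ℂ) • Q with hAdef
  rw [← hRsq]
  set Dm : Matrix (Fin Nrf) (Fin Nrf) ℂ := Matrix.diagonal (fun i => (d i : ℂ)) with hDmdef
  set Lam : Matrix (Fin Nbs) (Fin Nbs) ℂ := Matrix.diagonal (fun i => (lam i : ℂ)) with hLamdef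
  -- commutation of A with R
  have hAsub : A = R * R - (pn : ℂ) • 1 := by rw [hRsq]; abel
  have comm : A * R = R * A := by
    rw [hAsub, sub_mul, mul_sub, smul_mul_assoc, mul_smul_comm, one_mul, mul_one,
      Matrix.mul_assoc]
  have commInv : A * R⁻¹ = R⁻¹ * A := by
    letI := R.invertibleOfIsUnitDet hRdet
    have h : Commute A ⅟R := Commute.invOf_right (show Commute A R from comm)
    rwa [Matrix.invOf_eq_nonsing_inv] at h
  -- T = R*R is positive definite
  have hT : (R * R).PosDef := by
    have hRinj : ∀ x : Fin Nbs → ℂ, x ≠ 0 → R *ᵥ x ≠ 0 := by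
      intro x hx h0
      have hinj := Matrix.mulVec_injective_iff_isUnit.mpr hR.isUnit
      exact hx (hinj (show R *ᵥ x = R *ᵥ 0 by simpa using h0))
    have h := aux_posDef_conj 1 Matrix.PosDef.one R hRinj
    simpa [hRH, Matrix.mul_one] using h
  -- unitarity facts
  have hE2 : E * Eᴴ = 1 := by
    have := (Matrix.mem_unitaryGroup_iff).mp hE
    rwa [Matrix.star_eq_conjTranspose] at this
  have hE1 : Eᴴ * E = 1 := by
    have := (Matrix.mem_unitaryGroup_iff').mp hE
    rwa [Matrix.star_eq_conjTranspose] at this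
  have hV2 : V * Vᴴ = 1 := by
    have := (Matrix.mem_unitaryGroup_iff).mp hV
    rwa [Matrix.star_eq_conjTranspose] at this
  have hV1 : Vᴴ * V = 1 := by
    have := (Matrix.mem_unitaryGroup_iff').mp hV
    rwa [Matrix.star_eq_conjTranspose] at this
  ----------------------------------------------------------------
  -- LHS : value for general full-rank W
  ----------------------------------------------------------------
  have hWHinj : ∀ x : Fin Nrf → ℂ, x ≠ 0 → Wᴴ *ᵥ x ≠ 0 :=
    aux_inj_of_rank Wᴴ (by rw [Matrix.rank_conjTranspose, hW])
  have hM : (W * (R * R) * Wᴴ).PosDef := by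
    have h := aux_posDef_conj (R * R) hT Wᴴ hWHinj
    rwa [conjTranspose_conjTranspose] at h
  set M : Matrix (Fin Nrf) (Fin Nrf) ℂ := W * (R * R) * Wᴴ with hMdef
  have hMdet : IsUnit M.det := (Matrix.isUnit_iff_isUnit_det M).mp hM.isUnit
  have hMMi : M * M⁻¹ = 1 := Matrix.mul_nonsing_inv M hMdet
  have hMiM : M⁻¹ * M = 1 := Matrix.nonsing_inv_mul M hMdet
  have hMiH : (M⁻¹)ᴴ = M⁻¹ := hM.1.inv
  set X : Matrix (Fin Nrf) (Fin Nbs) ℂ := W * R with hXdef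
  have hXH : Xᴴ = R * Wᴴ := by rw [hXdef, conjTranspose_mul, hRH]
  have hXXH : X * Xᴴ = M := by
    rw [hXH, hXdef, hMdef]; simp only [Matrix.mul_assoc]
  set P : Matrix (Fin Nbs) (Fin Nbs) ℂ := Xᴴ * M⁻¹ * X with hPdef
  have hPH : Pᴴ = P := by
    rw [hPdef]; exact aux_conj_herm X M⁻¹ hMiH
  have hPP : P * P = P := by
    calc P * P = Xᴴ * (M⁻¹ * ((X * Xᴴ) * (M⁻¹ * X))) := by
          rw [hPdef]; simp only [Matrix.mul_assoc]
      _ = Xᴴ * (M⁻¹ * X) := by rw [hXXH, mul_cancel_left hMiM]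
      _ = P := by rw [hPdef, Matrix.mul_assoc]
  have htrP : Matrix.trace P = (Nrf : ℂ) := by
    rw [hPdef, Matrix.trace_mul_cycle, hXXH, hMMi, Matrix.trace_one, Fintype.card_fin]
  set Pe : Matrix (Fin Nbs) (Fin Nbs) ℂ := Eᴴ * P * E with hPedef
  have hPeH : Peᴴ = Pe := by
    rw [hPedef]; exact aux_conj_herm E P hPH
  have hPePe : Pe * Pe = Pe := by
    calc Pe * Pe = Eᴴ * (P * ((E * Eᴴ) * (P * E))) := by
          rw [hPedef]; simp only [Matrix.mul_assoc]
      _ = Eᴴ * (P * (P * E)) := by rw [hE2, Matrix.one_mul]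
      _ = Eᴴ * (P * P * E) := by simp only [Matrix.mul_assoc]
      _ = Pe := by rw [hPP, hPedef]; simp only [Matrix.mul_assoc]
  have htrPe : Matrix.trace Pe = (Nrf : ℂ) := by
    rw [hPedef, Matrix.trace_mul_cycle, hE2, Matrix.one_mul, htrP]
  have hdiag := fun i => aux_proj_diag hPeH hPePe i
  have hsumt : ∑ i, (Pe i i).re = (Nrf : ℝ) := by
    have h1 : Matrix.trace Pe = ((∑ i, (Pe i i).re : ℝ) : ℂ) := by
      rw [Matrix.trace]
      push_cast
      exact Finset.sum_congr rfl (fun i _ => (hdiag i).1)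
    rw [htrPe] at h1
    exact_mod_cast h1.symm
  have hWH2 : Wᴴ = R⁻¹ * Xᴴ := by rw [hXH, ← Matrix.mul_assoc, hRinvR, Matrix.one_mul]
  have hW2 : W = X * R⁻¹ := by rw [hXdef, Matrix.mul_assoc, hRRinv, Matrix.mul_one]
  have hLtr : Matrix.trace (A * Wᴴ * M⁻¹ * (W * A)) =
      ((∑ i, lam i * (Pe i i).re : ℝ) : ℂ) := by
    have e1 : A * Wᴴ * M⁻¹ * (W * A) = (A * R⁻¹) * (P * (R⁻¹ * A)) := by
      rw [hWH2, hW2, hPdef]; simp only [Matrix.mul_assoc]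
    rw [e1, Matrix.trace_mul_comm]
    have e2 : P * (R⁻¹ * A) * (A * R⁻¹) = P * (R⁻¹ * (A * A) * R⁻¹) := by
      simp only [Matrix.mul_assoc]
    rw [e2, hdecomp, Matrix.trace_mul_comm]
    have e3 : E * Lam * Eᴴ * P = E * (Lam * (Eᴴ * P)) := by simp only [Matrix.mul_assoc]
    rw [e3, Matrix.trace_mul_comm]
    have e4 : Lam * (Eᴴ * P) * E = Lam * Pe := by rw [hPedef]; simp only [Matrix.mul_assoc]
    rw [e4, hLamdef, aux_trace_diagonal_mul]
    have hterm : ∀ i, (lam i : ℂ) * Pe i i = ((lam i * (Pe i i).re : ℝ) : ℂ) := fun i => by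
      conv_lhs => rw [(hdiag i).1]
      push_cast; ring
    calc ∑ i, (lam i : ℂ) * Pe i i
        = ∑ i, ((lam i * (Pe i i).re : ℝ) : ℂ) := Finset.sum_congr rfl (fun i _ => hterm i)
      _ = ((∑ i, lam i * (Pe i i).re : ℝ) : ℂ) := by push_cast; rfl
  ----------------------------------------------------------------
  -- RHS : value for the optimal combiner
  ----------------------------------------------------------------
  set J : Matrix (Fin Nbs) (Fin Nrf) ℂ :=
    Matrix.of (fun i j => if i = Fin.castLE hle j then (1 : ℂ) else 0) with hJdef
  have hUoEJ : Uo = E * J := by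
    rw [hUo]; ext i j
    simp [Matrix.mul_apply, hJdef, Finset.sum_ite_eq']
  have hJJ : Jᴴ * J = 1 := by
    ext a b
    by_cases hab : a = b
    · subst hab
      simp [Matrix.mul_apply, hJdef, Matrix.conjTranspose_apply, Finset.sum_ite_eq',
        Matrix.one_apply_eq]
    · simp only [Matrix.mul_apply, Matrix.conjTranspose_apply, hJdef, Matrix.of_apply,
        apply_ite (star : ℂ → ℂ), star_one, star_zero, ite_mul, one_mul, zero_mul, Finset.sum_ite_eq',
        Finset.mem_univ, if_true, Matrix.one_apply, Fin.castLE_inj, hab]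
  have hUoUo : Uoᴴ * Uo = 1 := by
    rw [hUoEJ, conjTranspose_mul, Matrix.mul_assoc, mul_cancel_left hE1, hJJ]
  have hUoinj : ∀ x : Fin Nrf → ℂ, x ≠ 0 → Uo *ᵥ x ≠ 0 := by
    intro x hx h0
    apply hx
    have h1 : Uoᴴ *ᵥ (Uo *ᵥ x) = x := by
      rw [Matrix.mulVec_mulVec, hUoUo, Matrix.one_mulVec]
    rw [h0, Matrix.mulVec_zero] at h1
    exact h1.symm
  have hN : (Uoᴴ * (R * R) * Uo).PosDef := aux_posDef_conj (R * R) hT Uo hUoinj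
  set N : Matrix (Fin Nrf) (Fin Nrf) ℂ := Uoᴴ * (R * R) * Uo with hNdef
  have hNdet : IsUnit N.det := (Matrix.isUnit_iff_isUnit_det N).mp hN.isUnit
  have hNNi : N * N⁻¹ = 1 := Matrix.mul_nonsing_inv N hNdet
  set Dminv : Matrix (Fin Nrf) (Fin Nrf) ℂ :=
    Matrix.diagonal (fun i => ((d i : ℂ))⁻¹) with hDminvdef
  have hdne : ∀ i, (d i : ℂ) ≠ 0 := fun i => Complex.ofReal_ne_zero.mpr (hd i).ne'
  have hDm1 : Dm * Dminv = 1 := by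
    rw [hDmdef, hDminvdef, Matrix.diagonal_mul_diagonal]
    rw [show (fun i => (d i : ℂ) * ((d i : ℂ))⁻¹) = fun _ => (1 : ℂ) from
      funext fun i => mul_inv_cancel₀ (hdne i)]
    exact Matrix.diagonal_one
  have hDm2 : Dminv * Dm = 1 := by
    rw [hDmdef, hDminvdef, Matrix.diagonal_mul_diagonal]
    rw [show (fun i => ((d i : ℂ))⁻¹ * (d i : ℂ)) = fun _ => (1 : ℂ) from
      funext fun i => inv_mul_cancel₀ (hdne i)]
    exact Matrix.diagonal_one
  have hDmH : Dmᴴ = Dm := by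
    have h : (star fun i => (d i : ℂ)) = fun i => (d i : ℂ) :=
      funext fun i => by simpa using Complex.conj_ofReal (d i)
    rw [hDmdef, Matrix.diagonal_conjTranspose, h]
  have hWoH : (V * Dm * Uoᴴ)ᴴ = Uo * (Dm * Vᴴ) := by
    simp only [conjTranspose_mul, conjTranspose_conjTranspose, hDmH, Matrix.mul_assoc]
  have hMo : V * Dm * Uoᴴ * (R * R) * (V * Dm * Uoᴴ)ᴴ = V * (Dm * (N * (Dm * Vᴴ))) := by
    rw [hWoH, hNdef]; simp only [Matrix.mul_assoc]
  have hMoInv : (V * Dm * Uoᴴ * (R * R) * (V * Dm * Uoᴴ)ᴴ)⁻¹ =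
      V * (Dminv * (N⁻¹ * (Dminv * Vᴴ))) := by
    rw [hMo]
    apply Matrix.inv_eq_right_inv
    calc V * (Dm * (N * (Dm * Vᴴ))) * (V * (Dminv * (N⁻¹ * (Dminv * Vᴴ))))
        = V * (Dm * (N * (Dm * (Vᴴ * (V * (Dminv * (N⁻¹ * (Dminv * Vᴴ)))))))) := by
          simp only [Matrix.mul_assoc]
      _ = 1 := by
          rw [mul_cancel_left hV1, mul_cancel_left hDm1, mul_cancel_left hNNi,
            mul_cancel_left hDm1, hV2]
  have hRcollapse : A * (V * Dm * Uoᴴ)ᴴ * (V * Dm * Uoᴴ * (R * R) * (V * Dm * Uoᴴ)ᴴ)⁻¹ *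
      (V * Dm * Uoᴴ * A) = A * (Uo * (N⁻¹ * (Uoᴴ * A))) := by
    rw [hMoInv, hWoH]
    calc A * (Uo * (Dm * Vᴴ)) * (V * (Dminv * (N⁻¹ * (Dminv * Vᴴ)))) * (V * Dm * Uoᴴ * A)
        = A * (Uo * (Dm * (Vᴴ * (V * (Dminv * (N⁻¹ * (Dminv * (Vᴴ * (V * (Dm * (Uoᴴ * A))))))))))) := by
          simp only [Matrix.mul_assoc]
      _ = A * (Uo * (N⁻¹ * (Uoᴴ * A))) := by
          rw [mul_cancel_left hV1, mul_cancel_left hV1, mul_cancel_left hDm1,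
            mul_cancel_left hDm2]
  -- the key diagonalization identity
  have hAA : A * A = R * (E * Lam * Eᴴ) * R := by
    rw [← hdecomp]
    have h : R * (R⁻¹ * (A * A) * R⁻¹) * R = A * A := by
      simp only [Matrix.mul_assoc, hRinvR, Matrix.mul_one, mul_cancel_left hRRinv]
    exact h.symm
  have hcomm2 : (A * A) * R⁻¹ = R⁻¹ * (A * A) := by
    rw [Matrix.mul_assoc, commInv, ← Matrix.mul_assoc, commInv, Matrix.mul_assoc]
  have hBR : R * (E * Lam * Eᴴ) = (E * Lam * Eᴴ) * R := by
    calc R * (E * Lam * Eᴴ) = R * (R⁻¹ * (A * A) * R⁻¹) := by rw [hdecomp]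
      _ = (A * A) * R⁻¹ := by simp only [Matrix.mul_assoc, mul_cancel_left hRRinv]
      _ = R⁻¹ * (A * A) := hcomm2
      _ = R⁻¹ * ((A * A) * (R⁻¹ * R)) := by rw [hRinvR, Matrix.mul_one]
      _ = (R⁻¹ * (A * A) * R⁻¹) * R := by simp only [Matrix.mul_assoc]
      _ = (E * Lam * Eᴴ) * R := by rw [hdecomp]
  set Rt : Matrix (Fin Nbs) (Fin Nbs) ℂ := Eᴴ * R * E with hRtdef
  have chainRt : ∀ (Y : Matrix (Fin Nbs) (Fin Nrf) ℂ), Eᴴ * (R * (E * Y)) = Rt * Y := by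
    intro Y; rw [hRtdef]; simp only [Matrix.mul_assoc]
  have l1 : Rt * Lam = Eᴴ * ((R * (E * Lam * Eᴴ)) * E) := by
    rw [hRtdef]; simp only [Matrix.mul_assoc, hE1, Matrix.mul_one]
  have l2 : Lam * Rt = Eᴴ * (((E * Lam * Eᴴ) * R) * E) := by
    rw [hRtdef]; simp only [Matrix.mul_assoc, mul_cancel_left hE1]
  have hcommL : Rt * Lam = Lam * Rt := by rw [l1, l2, hBR]
  have chainCommL : ∀ (Y : Matrix (Fin Nbs) (Fin Nrf) ℂ), Rt * (Lam * Y) = Lam * (Rt * Y) := by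
    intro Y; rw [← Matrix.mul_assoc, hcommL, Matrix.mul_assoc]
  set Lam1 : Matrix (Fin Nrf) (Fin Nrf) ℂ :=
    Matrix.diagonal (fun j => (lam (Fin.castLE hle j) : ℂ)) with hLam1def
  have hJL : Jᴴ * Lam = Lam1 * Jᴴ := by
    ext a b
    rw [hLamdef, hLam1def]
    simp only [Matrix.mul_diagonal, Matrix.diagonal_mul, Matrix.conjTranspose_apply, hJdef,
      Matrix.of_apply]
    by_cases hba : b = Fin.castLE hle a
    · subst hba; simp
    · simp [hba]
  have chainJL : ∀ (Y : Matrix (Fin Nbs) (Fin Nrf) ℂ), Jᴴ * (Lam * Y) = Lam1 * (Jᴴ * Y) := by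
    intro Y; rw [← Matrix.mul_assoc, hJL, Matrix.mul_assoc]
  have key : Uoᴴ * (A * A) * Uo = Lam1 * N := by
    calc Uoᴴ * (A * A) * Uo
        = Jᴴ * (Eᴴ * (R * (E * (Lam * (Eᴴ * (R * (E * J))))))) := by
          rw [hUoEJ, hAA]; simp only [conjTranspose_mul, Matrix.mul_assoc]
      _ = Jᴴ * (Rt * (Lam * (Rt * J))) := by rw [chainRt, chainRt]
      _ = Jᴴ * (Lam * (Rt * (Rt * J))) := by rw [chainCommL]
      _ = Lam1 * (Jᴴ * (Rt * (Rt * J))) := by rw [chainJL]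
      _ = Lam1 * N := by
          congr 1
          rw [hNdef, hUoEJ, hRtdef]
          simp only [conjTranspose_mul, Matrix.mul_assoc, mul_cancel_left hE2]
  have hRtr : Matrix.trace (A * (Uo * (N⁻¹ * (Uoᴴ * A)))) =
      ((∑ j : Fin Nrf, lam (Fin.castLE hle j) : ℝ) : ℂ) := by
    rw [Matrix.trace_mul_comm]
    have e : Uo * (N⁻¹ * (Uoᴴ * A)) * A = Uo * (N⁻¹ * (Uoᴴ * (A * A))) := by
      simp only [Matrix.mul_assoc]
    rw [e, Matrix.trace_mul_comm]
    have e2 : N⁻¹ * (Uoᴴ * (A * A)) * Uo = N⁻¹ * (Uoᴴ * (A * A) * Uo) := by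
      simp only [Matrix.mul_assoc]
    rw [e2, key, Matrix.trace_mul_comm, Matrix.mul_assoc, hNNi, Matrix.mul_one, hLam1def,
      Matrix.trace_diagonal]
    push_cast
    rfl
  ----------------------------------------------------------------
  -- conclusion
  ----------------------------------------------------------------
  rw [hLtr, hRcollapse, hRtr]
  have hineq : (∑ i, lam i * (Pe i i).re) ≤ ∑ j : Fin Nrf, lam (Fin.castLE hle j) :=
    aux_sum_bound hNrf hle lam hlam (fun i => (Pe i i).re)
      (fun i => (hdiag i).2.1) (fun i => (hdiag i).2.2) hsumt
  calc (K : ℂ) * ((∑ i, lam i * (Pe i i).re : ℝ) : ℂ)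
      = (((K : ℝ) * ∑ i, lam i * (Pe i i).re : ℝ) : ℂ) := by push_cast; ring
    _ ≤ (((K : ℝ) * ∑ j : Fin Nrf, lam (Fin.castLE hle j) : ℝ) : ℂ) := by
        rw [Complex.real_le_real]
        exact mul_le_mul_of_nonneg_left hineq (Nat.cast_nonneg K)
    _ = (K : ℂ) * ((∑ j : Fin Nrf, lam (Fin.castLE hle j) : ℝ) : ℂ) := by push_cast; ring
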